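/- arXiv:2111.05488 — 2 statements merged into one kernel-verified Lean document; each statement's English description precedes it below -/
import Mathlib

section
/- Let ℋ = ℂ²⊗ℂ²⊗ℂ²⊗ℂ² and for x = Σ c_{i₁i₂i₃i₄} e_{i₁i₂i₃i₄} ∈ ℋ define H(x) = c₁₁₁₁c₀₀₀₀ − c₁₁₁₀c₀₀₀₁ − c₁₁₀₁c₀₀₁₀ + c₁₁₀₀c₀₀₁₁ − c₁₀₁₁c₀₁₀₀ + c₁₀₁₀c₀₁₀₁ + c₁₀₀₁c₀₁₁₀ − c₁₀₀₀c₀₁₁₁. Then H is invariant under the action of SL(2,ℂ)⁴: for every g ∈ SL(2,ℂ)⁴ and every x ∈ ℋ, H(g·x) = H(x). -/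
set_option maxHeartbeats 4000000

/-- The Hilbert space of four qubits, in coordinates with respect to the basis
`e_{i₁i₂i₃i₄} = e_{i₁} ⊗ e_{i₂} ⊗ e_{i₃} ⊗ e_{i₄}` of `ℂ² ⊗ ℂ² ⊗ ℂ² ⊗ ℂ²`. -/
abbrev H4 : Type := Fin 2 → Fin 2 → Fin 2 → Fin 2 → ℂ

abbrev SL2 := Matrix.SpecialLinearGroup (Fin 2) ℂ

/-- The group `SL(2,ℂ)⁴`. -/
abbrev G4 := SL2 × SL2 × SL2 × SL2

/-- The action of `SL(2,ℂ)⁴` on `ℂ² ⊗ ℂ² ⊗ ℂ² ⊗ ℂ²`, given in coordinates: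
it is the linear extension of `(A,B,C,D)·(v₁⊗v₂⊗v₃⊗v₄) = Av₁⊗Bv₂⊗Cv₃⊗Dv₄`. -/
noncomputable def act (g : G4) (x : H4) : H4 := fun i1 i2 i3 i4 =>
  ∑ j1 : Fin 2, ∑ j2 : Fin 2, ∑ j3 : Fin 2, ∑ j4 : Fin 2,
    g.1 i1 j1 * g.2.1 i2 j2 * g.2.2.1 i3 j3 * g.2.2.2 i4 j4 * x j1 j2 j3 j4

/-- The quadratic invariant `H`. -/
noncomputable def Hpoly (x : H4) : ℂ :=
  x 1 1 1 1 * x 0 0 0 0 - x 1 1 1 0 * x 0 0 0 1 - x 1 1 0 1 * x 0 0 1 0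
    + x 1 1 0 0 * x 0 0 1 1 - x 1 0 1 1 * x 0 1 0 0 + x 1 0 1 0 * x 0 1 0 1
    + x 1 0 0 1 * x 0 1 1 0 - x 1 0 0 0 * x 0 1 1 1

/-- The polynomial `H` is invariant under `SL(2,ℂ)⁴`. -/
theorem Hpoly_invariant (g : G4) (x : H4) : Hpoly (act g x) = Hpoly x := by
  obtain ⟨A, B, C, D⟩ := g
  have hA : A.val 0 0 * A.val 1 1 - A.val 0 1 * A.val 1 0 = 1 := by
    have := A.property; rwa [Matrix.det_fin_two] at this
  have hB : B.val 0 0 * B.val 1 1 - B.val 0 1 * B.val 1 0 = 1 := by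
    have := B.property; rwa [Matrix.det_fin_two] at this
  have hC : C.val 0 0 * C.val 1 1 - C.val 0 1 * C.val 1 0 = 1 := by
    have := C.property; rwa [Matrix.det_fin_two] at this
  have hD : D.val 0 0 * D.val 1 1 - D.val 0 1 * D.val 1 0 = 1 := by
    have := D.property; rwa [Matrix.det_fin_two] at this
  simp only [Hpoly, act, Fin.sum_univ_two]
  linear_combination
    (((B.val 0 0 * B.val 1 1 - B.val 0 1 * B.val 1 0)) * ((C.val 0 0 * C.val 1 1 - C.val 0 1 * C.val 1 0)) * ((D.val 0 0 * D.val 1 1 - D.val 0 1 * D.val 1 0)) * (x 1 1 1 1 * x 0 0 0 0 - x 1 1 1 0 * x 0 0 0 1 - x 1 1 0 1 * x 0 0 1 0 + x 1 1 0 0 * x 0 0 1 1 - x 1 0 1 1 * x 0 1 0 0 + x 1 0 1 0 * x 0 1 0 1 + x 1 0 0 1 * x 0 1 1 0 - x 1 0 0 0 * x 0 1 1 1)) * hA +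
    (((C.val 0 0 * C.val 1 1 - C.val 0 1 * C.val 1 0)) * ((D.val 0 0 * D.val 1 1 - D.val 0 1 * D.val 1 0)) * (x 1 1 1 1 * x 0 0 0 0 - x 1 1 1 0 * x 0 0 0 1 - x 1 1 0 1 * x 0 0 1 0 + x 1 1 0 0 * x 0 0 1 1 - x 1 0 1 1 * x 0 1 0 0 + x 1 0 1 0 * x 0 1 0 1 + x 1 0 0 1 * x 0 1 1 0 - x 1 0 0 0 * x 0 1 1 1)) * hB +
    (((D.val 0 0 * D.val 1 1 - D.val 0 1 * D.val 1 0)) * (x 1 1 1 1 * x 0 0 0 0 - x 1 1 1 0 * x 0 0 0 1 - x 1 1 0 1 * x 0 0 1 0 + x 1 1 0 0 * x 0 0 1 1 - x 1 0 1 1 * x 0 1 0 0 + x 1 0 1 0 * x 0 1 0 1 + x 1 0 0 1 * x 0 1 1 0 - x 1 0 0 0 * x 0 1 1 1)) * hC +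
    (x 1 1 1 1 * x 0 0 0 0 - x 1 1 1 0 * x 0 0 0 1 - x 1 1 0 1 * x 0 0 1 0 + x 1 1 0 0 * x 0 0 1 1 - x 1 0 1 1 * x 0 1 0 0 + x 1 0 1 0 * x 0 1 0 1 + x 1 0 0 1 * x 0 1 1 0 - x 1 0 0 0 * x 0 1 1 1) * hD
end

section
/- Let ℋ = ℂ²⊗ℂ²⊗ℂ²⊗ℂ². For x = Σ c_{i₁i₂i₃i₄} e_{i₁i₂i₃i₄} ∈ ℋ, let M(x) denote the 4×4 matrix whose rows are indexed by pairs (i₁,i₂) ∈ {0,1}², whose columns are indexed by pairs (i₃,i₄) ∈ {0,1}², and whose ((i₁,i₂),(i₃,i₄)) entry is c_{i₁i₂i₃i₄}, and define L(x) = det M(x). Then L is invariant under the action of SL(2,ℂ)⁴: for every g ∈ SL(2,ℂ)⁴ and every x ∈ ℋ, L(g·x) = L(x). -/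
/-- The `4 × 4` matrix `M(x)` with rows indexed by `(i₁,i₂)`, columns by `(i₃,i₄)`,
and entries `c_{i₁i₂i₃i₄}`. -/
def Mmat (x : H4) : Matrix (Fin 2 × Fin 2) (Fin 2 × Fin 2) ℂ :=
  Matrix.of fun p q => x p.1 p.2 q.1 q.2

/-- The degree-4 invariant `L(x) = det M(x)`. -/
noncomputable def Lpoly (x : H4) : ℂ := (Mmat x).det

open Matrix Kronecker in
lemma Mmat_act (g : G4) (x : H4) :
    Mmat (act g x) =
      ((g.1 : Matrix (Fin 2) (Fin 2) ℂ) ⊗ₖ (g.2.1 : Matrix (Fin 2) (Fin 2) ℂ)) *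
        Mmat x *
        ((g.2.2.1 : Matrix (Fin 2) (Fin 2) ℂ) ⊗ₖ (g.2.2.2 : Matrix (Fin 2) (Fin 2) ℂ))ᵀ := by
  ext ⟨i1, i2⟩ ⟨i3, i4⟩
  simp only [Mmat, act, Matrix.of_apply, Matrix.mul_apply, Matrix.transpose_apply,
    Matrix.kroneckerMap_apply, Fintype.sum_prod_type, Fin.sum_univ_two]
  ring

/-- The polynomial `L` is invariant under `SL(2,ℂ)⁴`. -/
theorem Lpoly_invariant (g : G4) (x : H4) : Lpoly (act g x) = Lpoly x := by
  unfold Lpoly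
  open Matrix Kronecker in
  rw [Mmat_act, Matrix.det_mul, Matrix.det_mul, Matrix.det_transpose,
    Matrix.det_kronecker, Matrix.det_kronecker,
    g.1.det_coe, g.2.1.det_coe, g.2.2.1.det_coe, g.2.2.2.det_coe]
  simp
end
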